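/- Let n ≥ 2 be a natural number, let β be a real number with β > 1 − 1/(n−1), and let λ > 0. Set D := 1/(n−1) + β − 1, C₂ := 1/(n−1) − ((n−3)/(n−1))²/(4D), and C₃ := ((n−3)/(n−1))/(2D). Let I ⊆ ℝ be an open interval and let h, v, f : I → ℝ be differentiable with v and f twice differentiable and v > 0, f > 0 on I. Suppose that for all r ∈ I: h'(r) = −C₂h(r)² − λ/β, v'(r) = −C₃h(r)v(r), and (n−1)f'(r)/f(r) = h(r) − v'(r)/v(r). Then for all r ∈ I: v''(r) + (n−1)(f'(r)/f(r))v'(r) + (n−1)(f''(r)/f(r))v(r) + (λ/β)v(r) − (1−β)v(r)⁻¹v'(r)² = 0. -/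
import Mathlib
lemma stmt_9_alg (m β lam C₂ C₃ a V F : ℝ) (hm0 : m ≠ 0) (hβ0 : β ≠ 0)
    (hV0 : V ≠ 0) (hF0 : F ≠ 0)
    (key : -C₃*(1+C₃) - C₂ + β*C₃^2 + (1+C₃)^2/m = 0) :
    -C₃ * ((-C₂ * a ^ 2 - lam / β) * V + a * (-C₃ * a * V)) +
            m * ((a - -C₃ * a * V / V) * F / m / F) * (-C₃ * a * V) +
          m *
              (((-C₂ * a ^ 2 - lam / β -
                        (-C₃ * ((-C₂ * a ^ 2 - lam / β) * V + a * (-C₃ * a * V)) * V -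
                            -C₃ * a * V * (-C₃ * a * V)) /
                          V ^ 2) *
                      F +
                    (a - -C₃ * a * V / V) * ((a - -C₃ * a * V / V) * F / m)) /
                  m /
                F) *
            V +
        lam / β * V -
      (1 - β) * V⁻¹ * (-C₃ * a * V) ^ 2 =
    0 := by
  trans (a ^ 2 * V * (-C₃*(1+C₃) - C₂ + β*C₃^2 + (1+C₃)^2/m))
  · field_simp
    ring
  · rw [key, mul_zero]

/-- solutions of the ODE system for `(h, v, f)` satisfy the second-order
equation for `v`. -/
theorem stmt_9 (n : ℕ) (hn : 2 ≤ n) (β lam : ℝ)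
    (hβ : β > 1 - 1 / ((n : ℝ) - 1)) (hlam : 0 < lam)
    (D C₂ C₃ : ℝ)
    (hD : D = 1 / ((n : ℝ) - 1) + β - 1)
    (hC₂ : C₂ = 1 / ((n : ℝ) - 1) - (((n : ℝ) - 3) / ((n : ℝ) - 1)) ^ 2 / (4 * D))
    (hC₃ : C₃ = (((n : ℝ) - 3) / ((n : ℝ) - 1)) / (2 * D))
    (I : Set ℝ) (hIopen : IsOpen I) (hIint : I.OrdConnected)
    (h v f : ℝ → ℝ)
    (hdh : ∀ r ∈ I, DifferentiableAt ℝ h r)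
    (hdv : ∀ r ∈ I, DifferentiableAt ℝ v r)
    (hdv2 : ∀ r ∈ I, DifferentiableAt ℝ (deriv v) r)
    (hdf : ∀ r ∈ I, DifferentiableAt ℝ f r)
    (hdf2 : ∀ r ∈ I, DifferentiableAt ℝ (deriv f) r)
    (hvpos : ∀ r ∈ I, 0 < v r) (hfpos : ∀ r ∈ I, 0 < f r)
    (ode1 : ∀ r ∈ I, deriv h r = -C₂ * h r ^ 2 - lam / β)
    (ode2 : ∀ r ∈ I, deriv v r = -C₃ * h r * v r)
    (ode3 : ∀ r ∈ I, ((n : ℝ) - 1) * deriv f r / f r = h r - deriv v r / v r) :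
    ∀ r ∈ I,
      deriv (deriv v) r + ((n : ℝ) - 1) * (deriv f r / f r) * deriv v r
        + ((n : ℝ) - 1) * (deriv (deriv f) r / f r) * v r
        + (lam / β) * v r - (1 - β) * (v r)⁻¹ * (deriv v r) ^ 2 = 0 := by
  intro r hr
  have hn2 : (2:ℝ) ≤ (n:ℝ) := by exact_mod_cast hn
  have hm1 : (1:ℝ) ≤ (n:ℝ) - 1 := by linarith
  have hmpos : (0:ℝ) < (n:ℝ) - 1 := by linarith
  have hm0 : ((n:ℝ) - 1) ≠ 0 := ne_of_gt hmpos
  have hinv : 1 / ((n:ℝ) - 1) ≤ 1 := by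
    rw [div_le_one hmpos]; exact hm1
  have hβpos : 0 < β := by linarith
  have hβ0 : β ≠ 0 := ne_of_gt hβpos
  have hDpos : 0 < D := by rw [hD]; linarith
  have hD0 : D ≠ 0 := ne_of_gt hDpos
  have hV0 : v r ≠ 0 := ne_of_gt (hvpos r hr)
  have hF0 : f r ≠ 0 := ne_of_gt (hfpos r hr)
  have hnhds : I ∈ nhds r := hIopen.mem_nhds hr
  -- HasDerivAt facts
  have Hh : HasDerivAt h (-C₂ * h r ^ 2 - lam / β) r := by
    rw [← ode1 r hr]; exact (hdh r hr).hasDerivAt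
  have Hv : HasDerivAt v (-C₃ * h r * v r) r := by
    rw [← ode2 r hr]; exact (hdv r hr).hasDerivAt
  -- second derivative of v
  have hveq : deriv v =ᶠ[nhds r] fun x => -C₃ * (h x * v x) := by
    filter_upwards [hnhds] with x hx
    rw [ode2 x hx]; ring
  have Hvv : HasDerivAt (fun x => -C₃ * (h x * v x))
      (-C₃ * ((-C₂ * h r ^ 2 - lam / β) * v r + h r * (-C₃ * h r * v r))) r :=
    (Hh.mul Hv).const_mul (-C₃)
  have hdvv : deriv (deriv v) r
      = -C₃ * ((-C₂ * h r ^ 2 - lam / β) * v r + h r * (-C₃ * h r * v r)) := by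
    rw [hveq.deriv_eq, Hvv.deriv]
  -- first derivative of f
  have hfd : ∀ x ∈ I, deriv f x = (h x - deriv v x / v x) * f x / ((n:ℝ) - 1) := by
    intro x hx
    have := ode3 x hx
    have hfx : f x ≠ 0 := ne_of_gt (hfpos x hx)
    field_simp at this ⊢
    linarith [this]
  have hfeq : deriv f =ᶠ[nhds r] fun x => (h x - deriv v x / v x) * f x / ((n:ℝ) - 1) := by
    filter_upwards [hnhds] with x hx; exact hfd x hx
  -- derivative of deriv v (as function) at r
  have Hdv : HasDerivAt (deriv v)
      (-C₃ * ((-C₂ * h r ^ 2 - lam / β) * v r + h r * (-C₃ * h r * v r))) r := by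
    have := (hdv2 r hr).hasDerivAt
    rwa [hdvv] at this
  have Hf : HasDerivAt f ((h r - deriv v r / v r) * f r / ((n:ℝ) - 1)) r := by
    rw [← hfd r hr]; exact (hdf r hr).hasDerivAt
  set dv2 : ℝ := -C₃ * ((-C₂ * h r ^ 2 - lam / β) * v r + h r * (-C₃ * h r * v r)) with hdv2def
  have Hinner : HasDerivAt (fun x => h x - deriv v x / v x)
      ((-C₂ * h r ^ 2 - lam / β) - (dv2 * v r - deriv v r * (-C₃ * h r * v r)) / v r ^ 2) r :=
    Hh.sub (Hdv.div Hv hV0)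
  have Hg : HasDerivAt (fun x => (h x - deriv v x / v x) * f x / ((n:ℝ) - 1))
      ((((-C₂ * h r ^ 2 - lam / β) - (dv2 * v r - deriv v r * (-C₃ * h r * v r)) / v r ^ 2) * f r
        + (h r - deriv v r / v r) * ((h r - deriv v r / v r) * f r / ((n:ℝ) - 1))) / ((n:ℝ) - 1)) r :=
    (Hinner.mul Hf).div_const _
  have hdff : deriv (deriv f) r
      = (((-C₂ * h r ^ 2 - lam / β) - (dv2 * v r - deriv v r * (-C₃ * h r * v r)) / v r ^ 2) * f r
        + (h r - deriv v r / v r) * ((h r - deriv v r / v r) * f r / ((n:ℝ) - 1))) / ((n:ℝ) - 1) := by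
    rw [hfeq.deriv_eq, Hg.deriv]
  have key : -C₃*(1+C₃) - C₂ + β*C₃^2 + (1+C₃)^2/((n:ℝ)-1) = 0 := by
    have hsub : β - 1 + 1/((n:ℝ)-1) = D := by rw [hD]; ring
    have e1 : -C₃*(1+C₃) - C₂ + β*C₃^2 + (1+C₃)^2/((n:ℝ)-1)
        = (β - 1 + 1/((n:ℝ)-1))*C₃^2 + C₃*(2/((n:ℝ)-1) - 1) + (1/((n:ℝ)-1) - C₂) := by
      field_simp
      ring
    rw [e1, hsub, hC₂, hC₃]
    field_simp
    ring
  rw [hdvv, hdff, hfd r hr, ode2 r hr, hdv2def]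
  exact stmt_9_alg ((n:ℝ) - 1) β lam C₂ C₃ (h r) (v r) (f r) hm0 hβ0 hV0 hF0 key
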